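/- (Closed form of the outage probability of the heuristic policy, Section V) Let n ≥ 1 be an integer, β ∈ (0,1), x ∈ (0,1], and let π : {0,…,n} → ℝ be a probability vector (π(e) ≥ 0, Σ_e π(e) = 1) satisfying π(0)·β = π(1)·(1−β)·x and π(e)·β·(1−x) = π(e+1)·(1−β)·x for 1 ≤ e ≤ n−1. Then, with r := β(1−x)/((1−β)x): if x ≠ β, π(0) = (β − x)/(β·rⁿ − x); and if x = β, π(0) = (1−β)/(n + 1 − β). -/

import Mathlib

open Finset

/-- Closed form of the battery-depletion (outage) probability under the heuristic
policy (Section V): with `r = β(1−x)/((1−β)x)`, the stationary probability of the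
empty-battery state is `(β − x)/(β rⁿ − x)` if `x ≠ β`, and `(1−β)/(n + 1 − β)` if
`x = β`. -/
theorem heuristic_outage_probability
    (n : ℕ) (hn : 1 ≤ n)
    (β : ℝ) (hβ : β ∈ Set.Ioo (0:ℝ) 1)
    (x : ℝ) (hx : x ∈ Set.Ioc (0:ℝ) 1)
    (π : ℕ → ℝ)
    (hπnonneg : ∀ e ≤ n, 0 ≤ π e)
    (hπsum : ∑ e ∈ range (n + 1), π e = 1)
    (hbal0 : π 0 * β = π 1 * ((1 - β) * x))
    (hbal : ∀ e, 1 ≤ e → e ≤ n - 1 →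
      π e * (β * (1 - x)) = π (e + 1) * ((1 - β) * x))
    (r : ℝ) (hr : r = β * (1 - x) / ((1 - β) * x)) :
    (x ≠ β → π 0 = (β - x) / (β * r ^ n - x)) ∧
    (x = β → π 0 = (1 - β) / ((n : ℝ) + 1 - β)) := by
  obtain ⟨hβ0, hβ1⟩ := hβ
  obtain ⟨hx0, hx1⟩ := hx
  have hd : (1 - β) * x > 0 := mul_pos (by linarith) hx0
  have hdne : (1 - β) * x ≠ 0 := ne_of_gt hd
  -- π (k+1) = π 1 * r ^ k for k + 1 ≤ n
  have hstep : ∀ k, k + 1 ≤ n → π (k + 1) = π 1 * r ^ k := by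
    intro k hk
    induction k with
    | zero => simp
    | succ k ih =>
      have hk' : k + 1 ≤ n := by omega
      have hb := hbal (k + 1) (by omega) (by omega)
      have : π (k + 2) = π (k + 1) * r := by
        rw [hr]
        field_simp
        linarith [hb]
      rw [this, ih hk', pow_succ]
      ring
  -- rewrite the sum
  have hsum2 : π 0 + π 1 * (∑ k ∈ range n, r ^ k) = 1 := by
    have h1 : ∑ e ∈ range (n + 1), π e
        = (∑ k ∈ range n, π (k + 1)) + π 0 := Finset.sum_range_succ' π n
    have h2 : ∑ k ∈ range n, π (k + 1) = ∑ k ∈ range n, π 1 * r ^ k := by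
      apply Finset.sum_congr rfl
      intro k hk
      exact hstep k (by simpa using Finset.mem_range.mp hk)
    rw [h1, h2, ← Finset.mul_sum] at hπsum
    linarith [hπsum]
  have hπ1 : π 1 = π 0 * β / ((1 - β) * x) := by
    field_simp
    linarith [hbal0]
  constructor
  · intro hne
    have hrne1 : r ≠ 1 := by
      intro h
      apply hne
      rw [hr] at h
      field_simp at h
      nlinarith [h]
    have hG : ∑ k ∈ range n, r ^ k = (r ^ n - 1) / (r - 1) :=
      geom_sum_eq hrne1 n
    have hrm1 : r - 1 = (β - x) / ((1 - β) * x) := by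
      rw [hr]; field_simp; ring
    have hbx : β - x ≠ 0 := fun h => hne (by linarith)
    have key : π 0 * (β * r ^ n - x) = β - x := by
      rw [hG, hπ1, hrm1] at hsum2
      field_simp at hsum2
      nlinarith [hsum2]
    have hDne : β * r ^ n - x ≠ 0 := by
      intro h
      rw [h, mul_zero] at key
      exact hbx key.symm
    field_simp
    linarith [key]
  · intro hxβ
    subst hxβ
    have hr1 : r = 1 := by
      rw [hr, div_eq_one_iff_eq hdne]; ring
    have hG : ∑ k ∈ range n, r ^ k = (n : ℝ) := by
      simp [hr1]
    rw [hG, hπ1] at hsum2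
    have hnn : (1:ℝ) ≤ (n : ℝ) := by exact_mod_cast hn
    have hden : (n : ℝ) + 1 - x ≠ 0 := by intro h; nlinarith
    rw [eq_div_iff hden]
    have hsum3 : π 0 * ((1 - x) * x) + π 0 * x * (n : ℝ) = (1 - x) * x := by
      field_simp at hsum2
      linear_combination x * hsum2
    have h3 : x * (π 0 * ((n : ℝ) + 1 - x)) = x * (1 - x) := by
      linear_combination hsum3
    exact mul_left_cancel₀ (ne_of_gt hx0) h3
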